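/- Let u : [a,b] → ℝ be Hölder continuous of order r ∈ (0,1] with constant H and f of bounded variation on [a,b]. Then for all a ≤ t₀ ≤ x ≤ t₁ ≤ b, |∫ₐᵇ f du − [u(x) − u(a)]·f(t₀) − [u(b) − u(x)]·f(t₁)| ≤ H·(t₀−a)^r·V(f;[a,t₀]) + H·( (t₁−t₀)/2 + |x − (t₀+t₁)/2| )^r·V(f;[t₀,t₁]) + H·(b−t₁)^r·V(f;[t₁,b]). -/

import Mathlib

open Finset

lemma abel_identity (g U : ℕ → ℝ) (c : ℝ) (m : ℕ) :
    ∑ i ∈ Finset.range (m+1), g i * (U (i+1) - U i)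
      = g m * (U (m+1) - c) - g 0 * (U 0 - c)
        - ∑ i ∈ Finset.range m, (g (i+1) - g i) * (U (i+1) - c) := by
  induction m with
  | zero => simp; ring
  | succ k ih => rw [Finset.sum_range_succ, ih, Finset.sum_range_succ]; ring

lemma sum_abs_le_variation (f : ℝ → ℝ) {s : Set ℝ} (hs : eVariationOn f s ≠ ⊤)
    (z : ℕ → ℝ) (hz : Monotone z) (hzs : ∀ i, z i ∈ s) (k : ℕ) :
    ∑ i ∈ Finset.range k, |f (z (i+1)) - f (z i)| ≤ (eVariationOn f s).toReal := by
  have h := eVariationOn.sum_le (f := f) (n := k) hz hzs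
  have heq : ∑ i ∈ Finset.range k, |f (z (i+1)) - f (z i)|
      = (∑ i ∈ Finset.range k, edist (f (z (i+1))) (f (z i))).toReal := by
    rw [ENNReal.toReal_sum (fun i _ => edist_ne_top _ _)]
    refine Finset.sum_congr rfl fun i _ => ?_
    rw [edist_dist, ENNReal.toReal_ofReal dist_nonneg, Real.dist_eq]
  rw [heq]
  exact ENNReal.toReal_mono hs h

lemma blockA (f u : ℝ → ℝ) (p : ℕ → ℝ) (m : ℕ) (e B V : ℝ) (hBnn : 0 ≤ B)
    (hB : ∀ j ≤ m+1, |u (p j) - u (p 0)| ≤ B)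
    (hchain : (∑ i ∈ Finset.range m, |f (p (i+1)) - f (p i)|) + |f e - f (p m)| ≤ V) :
    |∑ i ∈ Finset.range (m+1), (f (p i) - f e) * (u (p (i+1)) - u (p i))| ≤ B * V := by
  rw [abel_identity (fun i => f (p i) - f e) (fun i => u (p i)) (u (p 0)) m]
  simp only [sub_self, mul_zero, sub_zero]
  have h1 : |(f (p m) - f e) * (u (p (m+1)) - u (p 0))| ≤ |f e - f (p m)| * B := by
    rw [abs_mul, abs_sub_comm (f (p m))]
    exact mul_le_mul_of_nonneg_left (hB (m+1) le_rfl) (abs_nonneg _)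
  have h2 : |∑ i ∈ Finset.range m,
      ((f (p (i+1)) - f e) - (f (p i) - f e)) * (u (p (i+1)) - u (p 0))|
      ≤ (∑ i ∈ Finset.range m, |f (p (i+1)) - f (p i)|) * B := by
    refine (Finset.abs_sum_le_sum_abs _ _).trans ?_
    rw [Finset.sum_mul]
    refine Finset.sum_le_sum fun i hi => ?_
    rw [sub_sub_sub_cancel_right, abs_mul]
    exact mul_le_mul_of_nonneg_left (hB (i+1) (by simp at hi; omega)) (abs_nonneg _)
  calc |((f (p m) - f e) * (u (p (m+1)) - u (p 0)))
        - ∑ i ∈ Finset.range m, ((f (p (i+1)) - f e) - (f (p i) - f e)) * (u (p (i+1)) - u (p 0))|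
      ≤ |(f (p m) - f e) * (u (p (m+1)) - u (p 0))|
        + |∑ i ∈ Finset.range m, ((f (p (i+1)) - f e) - (f (p i) - f e)) * (u (p (i+1)) - u (p 0))| :=
        abs_sub _ _
    _ ≤ |f e - f (p m)| * B + (∑ i ∈ Finset.range m, |f (p (i+1)) - f (p i)|) * B := by
        linarith
    _ ≤ B * V := by nlinarith [abs_nonneg (f e - f (p m)),
        Finset.sum_nonneg (fun i (_ : i ∈ Finset.range m) => abs_nonneg (f (p (i+1)) - f (p i)))]

lemma blockB (f u : ℝ → ℝ) (p : ℕ → ℝ) (m : ℕ) (B V : ℝ) (hBnn : 0 ≤ B)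
    (hB : ∀ j ≤ m+1, |u (p j) - u (p (m+1))| ≤ B)
    (hchain : (∑ i ∈ Finset.range m, |f (p (i+1)) - f (p i)|) ≤ V) :
    |∑ i ∈ Finset.range (m+1), (f (p i) - f (p 0)) * (u (p (i+1)) - u (p i))| ≤ B * V := by
  rw [abel_identity (fun i => f (p i) - f (p 0)) (fun i => u (p i)) (u (p (m+1))) m]
  simp only [sub_self, mul_zero, zero_mul, sub_zero, zero_sub]
  rw [abs_neg]
  have h2 : |∑ i ∈ Finset.range m,
      ((f (p (i+1)) - f (p 0)) - (f (p i) - f (p 0))) * (u (p (i+1)) - u (p (m+1)))|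
      ≤ (∑ i ∈ Finset.range m, |f (p (i+1)) - f (p i)|) * B := by
    refine (Finset.abs_sum_le_sum_abs _ _).trans ?_
    rw [Finset.sum_mul]
    refine Finset.sum_le_sum fun i hi => ?_
    rw [sub_sub_sub_cancel_right, abs_mul]
    exact mul_le_mul_of_nonneg_left (hB (i+1) (by simp at hi; omega)) (abs_nonneg _)
  calc _ ≤ (∑ i ∈ Finset.range m, |f (p (i+1)) - f (p i)|) * B := h2
    _ ≤ B * V := by nlinarith

/-- A tagged partition of the interval `[a, b]`. -/
structure TaggedPartition (a b : ℝ) where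
  n : ℕ
  pts : ℕ → ℝ
  tag : ℕ → ℝ
  mono : ∀ i, pts i ≤ pts (i + 1)
  first : pts 0 = a
  last : pts n = b
  tag_mem : ∀ i, pts i ≤ tag i ∧ tag i ≤ pts (i + 1)

/-- The Riemann–Stieltjes sum of `f` with respect to `u` over a tagged partition. -/
def RSsum (f u : ℝ → ℝ) {a b : ℝ} (P : TaggedPartition a b) : ℝ :=
  ∑ i ∈ Finset.range P.n, f (P.tag i) * (u (P.pts (i + 1)) - u (P.pts i))

/-- `IsRSIntegral f u a b I` means the Riemann–Stieltjes integral `∫ₐᵇ f du` exists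
and equals `I`: Riemann–Stieltjes sums converge to `I` as the mesh tends to `0`. -/
def IsRSIntegral (f u : ℝ → ℝ) (a b I : ℝ) : Prop :=
  ∀ ε > 0, ∃ δ > 0, ∀ P : TaggedPartition a b,
    (∀ i < P.n, P.pts (i + 1) - P.pts i < δ) → |RSsum f u P - I| < ε

/-- The total (Jordan) variation of `u` on `[a, b]`. -/
noncomputable def totalVar (u : ℝ → ℝ) (a b : ℝ) : ℝ :=
  (eVariationOn u (Set.Icc a b)).toReal

set_option maxHeartbeats 2000000 in
theorem two_point_dual_refined_bounded_variation
    (a b H r t0 x t1 I : ℝ) (f u : ℝ → ℝ)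
    (hr : 0 < r) (hr1 : r ≤ 1) (hH : 0 ≤ H)
    (hu : ∀ s ∈ Set.Icc a b, ∀ t ∈ Set.Icc a b, |u s - u t| ≤ H * |s - t| ^ r)
    (hf : BoundedVariationOn f (Set.Icc a b))
    (ht0 : a ≤ t0) (ht0x : t0 ≤ x) (hxt1 : x ≤ t1) (ht1 : t1 ≤ b)
    (hI : IsRSIntegral f u a b I) :
    |I - (u x - u a) * f t0 - (u b - u x) * f t1| ≤
      H * (t0 - a) ^ r * totalVar f a t0 +
        H * ((t1 - t0) / 2 + |x - (t0 + t1) / 2|) ^ r * totalVar f t0 t1 +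
        H * (b - t1) ^ r * totalVar f t1 b := by
  classical
  have hab : a ≤ b := by linarith
  set M := (t1 - t0) / 2 + |x - (t0 + t1) / 2| with hMdef
  have habs1 := le_abs_self (x - (t0 + t1) / 2)
  have habs2 := neg_abs_le (x - (t0 + t1) / 2)
  have hxM : x - t0 ≤ M := by rw [hMdef]; linarith
  have hMx : t1 - x ≤ M := by rw [hMdef]; linarith
  have hMnn : 0 ≤ M := by linarith
  have hfin : ∀ c d : ℝ, a ≤ c → d ≤ b → eVariationOn f (Set.Icc c d) ≠ ⊤ :=
    fun c d hc hd => ne_top_of_le_ne_top hf (eVariationOn.mono f (Set.Icc_subset_Icc hc hd))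
  -- Hölder helper
  have hubound : ∀ s t D : ℝ, a ≤ s → s ≤ b → a ≤ t → t ≤ b → |s - t| ≤ D →
      |u s - u t| ≤ H * D ^ r := by
    intro s t D has hsb hat htb hD
    calc |u s - u t| ≤ H * |s - t| ^ r := hu s ⟨has, hsb⟩ t ⟨hat, htb⟩
      _ ≤ H * D ^ r :=
        mul_le_mul_of_nonneg_left (Real.rpow_le_rpow (abs_nonneg _) hD hr.le) hH
  refine le_of_forall_pos_le_add fun ε hε => ?_
  obtain ⟨δ, hδ, hP⟩ := hI ε hε
  obtain ⟨n0, hn0⟩ := exists_nat_gt (max 1 ((b - a) / δ))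
  obtain ⟨m, rfl⟩ : ∃ m : ℕ, n0 = m + 1 := by
    have h1 : (1:ℝ) < n0 := lt_of_le_of_lt (le_max_left _ _) hn0
    have h2 : 1 ≤ n0 := by exact_mod_cast h1.le
    exact ⟨n0 - 1, by omega⟩
  have hLpos : (0:ℝ) < (m:ℝ) + 1 := by positivity
  have hLne : ((m:ℝ) + 1) ≠ 0 := ne_of_gt hLpos
  have hbd : b - a < ((m:ℝ) + 1) * δ := by
    have h1 : (b - a) / δ < (m:ℝ) + 1 := by
      have := lt_of_le_of_lt (le_max_right 1 ((b - a) / δ)) hn0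
      push_cast at this; linarith
    calc b - a = (b - a) / δ * δ := by field_simp
      _ < ((m:ℝ) + 1) * δ := mul_lt_mul_of_pos_right h1 hδ
  -- the partition points
  set pts : ℕ → ℝ := fun i =>
    if i ≤ m + 1 then a + (t0 - a) * (i : ℝ) / ((m:ℝ) + 1)
    else if i ≤ 2*(m+1) then t0 + (x - t0) * ((i - (m+1) : ℕ) : ℝ) / ((m:ℝ) + 1)
    else if i ≤ 3*(m+1) then x + (t1 - x) * ((i - 2*(m+1) : ℕ) : ℝ) / ((m:ℝ) + 1)
    else if i ≤ 4*(m+1) then t1 + (b - t1) * ((i - 3*(m+1) : ℕ) : ℝ) / ((m:ℝ) + 1)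
    else b with hptsdef
  have hval0 : ∀ i ≤ m+1, pts i = a + (t0 - a) * (i : ℝ) / ((m:ℝ) + 1) := by
    intro i hi; simp only [hptsdef]; rw [if_pos hi]
  have hval1 : ∀ i ≤ m+1, pts ((m+1) + i) = t0 + (x - t0) * (i : ℝ) / ((m:ℝ) + 1) := by
    intro i hi
    rcases Nat.eq_zero_or_pos i with h0 | h0
    · subst h0
      rw [hval0 (m+1) le_rfl]
      push_cast
      field_simp
      ring
    · have h1 : ¬ ((m+1) + i ≤ m+1) := by omega
      have h2 : (m+1) + i ≤ 2*(m+1) := by omega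
      have h3 : (m+1) + i - (m+1) = i := by omega
      simp only [hptsdef]; rw [if_neg h1, if_pos h2, h3]
  have hval2 : ∀ i ≤ m+1, pts (2*(m+1) + i) = x + (t1 - x) * (i : ℝ) / ((m:ℝ) + 1) := by
    intro i hi
    rcases Nat.eq_zero_or_pos i with h0 | h0
    · subst h0
      have : 2*(m+1) + 0 = (m+1) + (m+1) := by omega
      rw [this, hval1 (m+1) le_rfl]
      push_cast
      field_simp
      ring
    · have h1 : ¬ (2*(m+1) + i ≤ m+1) := by omega
      have h2 : ¬ (2*(m+1) + i ≤ 2*(m+1)) := by omega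
      have h3 : 2*(m+1) + i ≤ 3*(m+1) := by omega
      have h4 : 2*(m+1) + i - 2*(m+1) = i := by omega
      simp only [hptsdef]; rw [if_neg h1, if_neg h2, if_pos h3, h4]
  have hval3 : ∀ i ≤ m+1, pts (3*(m+1) + i) = t1 + (b - t1) * (i : ℝ) / ((m:ℝ) + 1) := by
    intro i hi
    rcases Nat.eq_zero_or_pos i with h0 | h0
    · subst h0
      have : 3*(m+1) + 0 = 2*(m+1) + (m+1) := by omega
      rw [this, hval2 (m+1) le_rfl]
      push_cast
      field_simp
      ring
    · have h1 : ¬ (3*(m+1) + i ≤ m+1) := by omega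
      have h2 : ¬ (3*(m+1) + i ≤ 2*(m+1)) := by omega
      have h3 : ¬ (3*(m+1) + i ≤ 3*(m+1)) := by omega
      have h4 : 3*(m+1) + i ≤ 4*(m+1) := by omega
      have h5 : 3*(m+1) + i - 3*(m+1) = i := by omega
      simp only [hptsdef]; rw [if_neg h1, if_neg h2, if_neg h3, if_pos h4, h5]
  have hp0 : pts 0 = a := by rw [hval0 0 (by omega)]; simp
  have hpN : pts (m+1) = t0 := by
    have := hval1 0 (Nat.zero_le _); simpa using this
  have hp2 : pts (2*(m+1)) = x := by
    have := hval2 0 (Nat.zero_le _); simpa using this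
  have hp3 : pts (3*(m+1)) = t1 := by
    have := hval3 0 (Nat.zero_le _); simpa using this
  have hp4 : pts (4*(m+1)) = b := by
    have h : 4*(m+1) = 3*(m+1) + (m+1) := by omega
    rw [h, hval3 (m+1) le_rfl]
    push_cast; field_simp; ring
  have hge : ∀ i, 4*(m+1) ≤ i → pts i = b := by
    intro i hi
    rcases eq_or_lt_of_le hi with h | h
    · rw [← h, hp4]
    · have h1 : ¬ (i ≤ m+1) := by omega
      have h2 : ¬ (i ≤ 2*(m+1)) := by omega
      have h3 : ¬ (i ≤ 3*(m+1)) := by omega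
      have h4 : ¬ (i ≤ 4*(m+1)) := by omega
      simp only [hptsdef]; rw [if_neg h1, if_neg h2, if_neg h3, if_neg h4]
  -- generic step computation
  have gen : ∀ (c d : ℝ) (j : ℕ), c ≤ d → d - c ≤ b - a →
      0 ≤ (c + (d - c) * ((j+1 : ℕ) : ℝ) / ((m:ℝ)+1)) - (c + (d - c) * ((j : ℕ) : ℝ) / ((m:ℝ)+1))
      ∧ (c + (d - c) * ((j+1 : ℕ) : ℝ) / ((m:ℝ)+1)) - (c + (d - c) * ((j : ℕ) : ℝ) / ((m:ℝ)+1))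
        ≤ (b - a) / ((m:ℝ)+1) := by
    intro c d j hcd hba
    have hdiff : (c + (d - c) * ((j+1 : ℕ) : ℝ) / ((m:ℝ)+1))
        - (c + (d - c) * ((j : ℕ) : ℝ) / ((m:ℝ)+1)) = (d - c) / ((m:ℝ)+1) := by
      push_cast; field_simp; ring
    rw [hdiff]
    constructor
    · exact div_nonneg (by linarith) (by positivity)
    · gcongr
  have hstep : ∀ i, i < 4*(m+1) →
      0 ≤ pts (i+1) - pts i ∧ pts (i+1) - pts i ≤ (b - a) / ((m:ℝ)+1) := by
    intro i hi
    rcases (by omega : i < m+1 ∨ ((m+1) ≤ i ∧ i < 2*(m+1)) ∨ (2*(m+1) ≤ i ∧ i < 3*(m+1))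
        ∨ (3*(m+1) ≤ i ∧ i < 4*(m+1))) with h | h | h | h
    · rw [hval0 i (by omega), show i + 1 = i + 1 from rfl, hval0 (i+1) (by omega)]
      exact gen a t0 i ht0 (by linarith)
    · obtain ⟨j, rfl⟩ : ∃ j, i = (m+1) + j := ⟨i - (m+1), by omega⟩
      rw [show (m+1) + j + 1 = (m+1) + (j+1) from by omega, hval1 (j+1) (by omega),
        hval1 j (by omega)]
      exact gen t0 x j ht0x (by linarith)
    · obtain ⟨j, rfl⟩ : ∃ j, i = 2*(m+1) + j := ⟨i - 2*(m+1), by omega⟩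
      rw [show 2*(m+1) + j + 1 = 2*(m+1) + (j+1) from by omega, hval2 (j+1) (by omega),
        hval2 j (by omega)]
      exact gen x t1 j hxt1 (by linarith)
    · obtain ⟨j, rfl⟩ : ∃ j, i = 3*(m+1) + j := ⟨i - 3*(m+1), by omega⟩
      rw [show 3*(m+1) + j + 1 = 3*(m+1) + (j+1) from by omega, hval3 (j+1) (by omega),
        hval3 j (by omega)]
      exact gen t1 b j ht1 (by linarith)
  have hmono : ∀ i, pts i ≤ pts (i + 1) := by
    intro i
    by_cases hi : i < 4*(m+1)
    · linarith [(hstep i hi).1]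
    · rw [hge i (by omega), hge (i+1) (by omega)]
  have hmonoM : Monotone pts := monotone_nat_of_le_succ hmono
  set P : TaggedPartition a b :=
    ⟨4*(m+1), pts, pts, hmono, hp0, hp4, fun i => ⟨le_rfl, hmono i⟩⟩ with hPdef
  have hmesh : ∀ i, i < P.n → P.pts (i+1) - P.pts i < δ := by
    intro i hi
    have h1 := (hstep i hi).2
    have h2 : (b - a) / ((m:ℝ)+1) < δ := by
      rw [div_lt_iff₀ hLpos]; linarith
    exact lt_of_le_of_lt h1 h2
  have hRS := hP P hmesh
  -- membership facts
  have hmem0 : ∀ j ≤ m+1, a ≤ pts j ∧ pts j ≤ t0 := fun j hj =>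
    ⟨by rw [← hp0]; exact hmonoM (Nat.zero_le j), by rw [← hpN]; exact hmonoM hj⟩
  have hmem1 : ∀ j ≤ m+1, t0 ≤ pts ((m+1)+j) ∧ pts ((m+1)+j) ≤ x := fun j hj =>
    ⟨by rw [← hpN]; exact hmonoM (Nat.le_add_right _ j),
     by rw [← hp2]; exact hmonoM (by omega)⟩
  have hmem2 : ∀ j ≤ m+1, x ≤ pts (2*(m+1)+j) ∧ pts (2*(m+1)+j) ≤ t1 := fun j hj =>
    ⟨by rw [← hp2]; exact hmonoM (Nat.le_add_right _ j),
     by rw [← hp3]; exact hmonoM (by omega)⟩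
  have hmem3 : ∀ j ≤ m+1, t1 ≤ pts (3*(m+1)+j) ∧ pts (3*(m+1)+j) ≤ b := fun j hj =>
    ⟨by rw [← hp3]; exact hmonoM (Nat.le_add_right _ j),
     by rw [← hp4]; exact hmonoM (by omega)⟩
  -- the four block sums
  set S0 : ℝ := ∑ i ∈ Finset.range (m+1),
    (f (pts i) - f t0) * (u (pts (i+1)) - u (pts i)) with hS0def
  set S1 : ℝ := ∑ i ∈ Finset.range (m+1),
    (f (pts ((m+1)+i)) - f t0) * (u (pts ((m+1)+i+1)) - u (pts ((m+1)+i))) with hS1def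
  set S2 : ℝ := ∑ i ∈ Finset.range (m+1),
    (f (pts (2*(m+1)+i)) - f t1) * (u (pts (2*(m+1)+i+1)) - u (pts (2*(m+1)+i))) with hS2def
  set S3 : ℝ := ∑ i ∈ Finset.range (m+1),
    (f (pts (3*(m+1)+i)) - f t1) * (u (pts (3*(m+1)+i+1)) - u (pts (3*(m+1)+i))) with hS3def
  -- Block 0 estimate
  have hS0b : |S0| ≤ (H * (t0-a)^r) * (eVariationOn f (Set.Icc a t0)).toReal := by
    rw [hS0def]
    apply blockA f u pts m t0 (H*(t0-a)^r) _
      (mul_nonneg hH (Real.rpow_nonneg (by linarith) r))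
    · intro j hj
      have h1 := hmem0 j hj
      rw [hp0]
      refine hubound _ _ _ h1.1 (by linarith) le_rfl hab ?_
      rw [abs_of_nonneg (by linarith)]; linarith
    · set z : ℕ → ℝ := fun i => if i ≤ m then pts i else t0 with hzdef
      have hzmono : Monotone z := by
        apply monotone_nat_of_le_succ
        intro i
        by_cases h1 : i + 1 ≤ m
        · simp only [hzdef]; rw [if_pos (by omega), if_pos h1]; exact hmono i
        · by_cases h2 : i ≤ m
          · simp only [hzdef]; rw [if_pos h2, if_neg h1]
            exact le_trans (hmonoM (by omega : i ≤ m+1)) (le_of_eq hpN)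
          · simp only [hzdef]; rw [if_neg h2, if_neg h1]
      have hzs : ∀ i, z i ∈ Set.Icc a t0 := by
        intro i; by_cases h : i ≤ m
        · simp only [hzdef]; rw [if_pos h]
          exact ⟨(hmem0 i (by omega)).1, (hmem0 i (by omega)).2⟩
        · simp only [hzdef]; rw [if_neg h]; exact ⟨by linarith, le_rfl⟩
      have hsum := sum_abs_le_variation f (hfin a t0 le_rfl (by linarith)) z hzmono hzs (m+1)
      rw [Finset.sum_range_succ] at hsum
      have e1 : ∀ i ∈ Finset.range m, |f (z (i+1)) - f (z i)| = |f (pts (i+1)) - f (pts i)| := by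
        intro i hi; simp only [Finset.mem_range] at hi
        simp only [hzdef]; rw [if_pos (by omega), if_pos (by omega)]
      rw [Finset.sum_congr rfl e1] at hsum
      have e2 : z m = pts m := by simp only [hzdef]; rw [if_pos le_rfl]
      have e3 : z (m+1) = t0 := by simp only [hzdef]; rw [if_neg (by omega)]
      rw [e2, e3] at hsum
      exact hsum
  -- Block 1 estimate
  have hS1b : |S1| ≤ (H * M^r) * (eVariationOn f (Set.Icc t0 x)).toReal := by
    rw [hS1def]
    have hE : f t0 = f (pts ((m+1)+0)) := by rw [Nat.add_zero, hpN]
    rw [hE]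
    apply blockB f u (fun j => pts ((m+1)+j)) m (H*M^r) _
      (mul_nonneg hH (Real.rpow_nonneg hMnn r))
    · intro j hj
      have h1 := hmem1 j hj
      have hx' : pts ((m+1)+(m+1)) = x := by
        rw [show (m+1)+(m+1) = 2*(m+1) from by ring, hp2]
      rw [hx']
      refine hubound _ _ _ (by linarith [h1.1]) (by linarith [h1.2]) (by linarith) (by linarith) ?_
      rw [abs_of_nonpos (by linarith [h1.2])]; linarith [h1.1]
    · have hzmono : Monotone (fun i => pts ((m+1) + min i m)) := by
        apply hmonoM.comp
        intro i j hij
        simp only [Nat.add_le_add_iff_left]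
        omega
      have hzs : ∀ i, pts ((m+1) + min i m) ∈ Set.Icc t0 x := fun i =>
        ⟨(hmem1 (min i m) (by omega)).1, (hmem1 (min i m) (by omega)).2⟩
      have hsum := sum_abs_le_variation f (hfin t0 x (by linarith) (by linarith))
        _ hzmono hzs m
      refine le_trans (le_of_eq (Finset.sum_congr rfl fun i hi => ?_)) hsum
      simp only [Finset.mem_range] at hi
      rw [show min i m = i from by omega, show min (i+1) m = i+1 from by omega]
  -- Block 2 estimate
  have hS2b : |S2| ≤ (H * M^r) * (eVariationOn f (Set.Icc x t1)).toReal := by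
    rw [hS2def]
    apply blockA f u (fun j => pts (2*(m+1)+j)) m t1 (H*M^r) _
      (mul_nonneg hH (Real.rpow_nonneg hMnn r))
    · intro j hj
      have h1 := hmem2 j hj
      simp only [Nat.add_zero]
      rw [hp2]
      refine hubound _ _ _ (by linarith [h1.1]) (by linarith [h1.2]) (by linarith) (by linarith) ?_
      rw [abs_of_nonneg (by linarith [h1.1])]; linarith [h1.2]
    · set z : ℕ → ℝ := fun i => if i ≤ m then pts (2*(m+1)+i) else t1 with hzdef
      have hzmono : Monotone z := by
        apply monotone_nat_of_le_succ
        intro i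
        by_cases h1 : i + 1 ≤ m
        · simp only [hzdef]; rw [if_pos (by omega), if_pos h1]
          rw [show 2*(m+1)+(i+1) = 2*(m+1)+i+1 from by omega]
          exact hmono _
        · by_cases h2 : i ≤ m
          · simp only [hzdef]; rw [if_pos h2, if_neg h1]
            exact (hmem2 i (by omega)).2
          · simp only [hzdef]; rw [if_neg h2, if_neg h1]
      have hzs : ∀ i, z i ∈ Set.Icc x t1 := by
        intro i; by_cases h : i ≤ m
        · simp only [hzdef]; rw [if_pos h]
          exact ⟨(hmem2 i (by omega)).1, (hmem2 i (by omega)).2⟩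
        · simp only [hzdef]; rw [if_neg h]; exact ⟨by linarith, le_rfl⟩
      have hsum := sum_abs_le_variation f (hfin x t1 (by linarith) (by linarith))
        z hzmono hzs (m+1)
      rw [Finset.sum_range_succ] at hsum
      have e1 : ∀ i ∈ Finset.range m,
          |f (z (i+1)) - f (z i)| = |f (pts (2*(m+1)+(i+1))) - f (pts (2*(m+1)+i))| := by
        intro i hi; simp only [Finset.mem_range] at hi
        simp only [hzdef]; rw [if_pos (by omega), if_pos (by omega)]
      rw [Finset.sum_congr rfl e1] at hsum
      have e2 : z m = pts (2*(m+1)+m) := by simp only [hzdef]; rw [if_pos le_rfl]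
      have e3 : z (m+1) = t1 := by simp only [hzdef]; rw [if_neg (by omega)]
      rw [e2, e3] at hsum
      exact hsum
  -- Block 3 estimate
  have hS3b : |S3| ≤ (H * (b-t1)^r) * (eVariationOn f (Set.Icc t1 b)).toReal := by
    rw [hS3def]
    have hE : f t1 = f (pts (3*(m+1)+0)) := by rw [Nat.add_zero, hp3]
    rw [hE]
    apply blockB f u (fun j => pts (3*(m+1)+j)) m (H*(b-t1)^r) _
      (mul_nonneg hH (Real.rpow_nonneg (by linarith) r))
    · intro j hj
      have h1 := hmem3 j hj
      have hb' : pts (3*(m+1)+(m+1)) = b := by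
        rw [show 3*(m+1)+(m+1) = 4*(m+1) from by ring, hp4]
      rw [hb']
      refine hubound _ _ _ (by linarith [h1.1]) (by linarith [h1.2]) hab le_rfl ?_
      rw [abs_of_nonpos (by linarith [h1.2])]; linarith [h1.1]
    · have hzmono : Monotone (fun i => pts (3*(m+1) + min i m)) := by
        apply hmonoM.comp
        intro i j hij
        simp only [Nat.add_le_add_iff_left]
        omega
      have hzs : ∀ i, pts (3*(m+1) + min i m) ∈ Set.Icc t1 b := fun i =>
        ⟨(hmem3 (min i m) (by omega)).1, (hmem3 (min i m) (by omega)).2⟩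
      have hsum := sum_abs_le_variation f (hfin t1 b (by linarith) le_rfl)
        _ hzmono hzs m
      refine le_trans (le_of_eq (Finset.sum_congr rfl fun i hi => ?_)) hsum
      simp only [Finset.mem_range] at hi
      rw [show min i m = i from by omega, show min (i+1) m = i+1 from by omega]
  -- sum splitting
  have hsplit : ∀ h : ℕ → ℝ, ∑ i ∈ Finset.range (4*(m+1)), h i
      = (∑ i ∈ Finset.range (m+1), h i) + (∑ i ∈ Finset.range (m+1), h ((m+1)+i))
        + (∑ i ∈ Finset.range (m+1), h (2*(m+1)+i))
        + (∑ i ∈ Finset.range (m+1), h (3*(m+1)+i)) := by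
    intro h
    rw [show 4*(m+1) = (m+1)+(m+1)+(m+1)+(m+1) from by ring]
    rw [Finset.sum_range_add, Finset.sum_range_add, Finset.sum_range_add]
    have e2 : ∀ i : ℕ, (m+1)+(m+1)+i = 2*(m+1)+i := fun i => by ring
    have e3 : ∀ i : ℕ, (m+1)+(m+1)+(m+1)+i = 3*(m+1)+i := fun i => by ring
    simp only [e2, e3]
    ring
  -- telescoping
  have htel : ∀ off : ℕ, ∑ i ∈ Finset.range (m+1), (u (pts (off+i+1)) - u (pts (off+i)))
      = u (pts (off+(m+1))) - u (pts off) := by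
    intro off
    exact Finset.sum_range_sub (fun i => u (pts (off+i))) (m+1)
  have htel0 : ∑ i ∈ Finset.range (m+1), (u (pts (i+1)) - u (pts i))
      = u (pts (m+1)) - u (pts 0) :=
    Finset.sum_range_sub (fun i => u (pts i)) (m+1)
  have hT01 : u x - u a = (∑ i ∈ Finset.range (m+1), (u (pts (i+1)) - u (pts i)))
      + (∑ i ∈ Finset.range (m+1), (u (pts ((m+1)+i+1)) - u (pts ((m+1)+i)))) := by
    rw [htel0, htel (m+1), hp0, hpN, show (m+1)+(m+1) = 2*(m+1) from by ring, hp2]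
    ring
  have hT23 : u b - u x = (∑ i ∈ Finset.range (m+1), (u (pts (2*(m+1)+i+1)) - u (pts (2*(m+1)+i))))
      + (∑ i ∈ Finset.range (m+1), (u (pts (3*(m+1)+i+1)) - u (pts (3*(m+1)+i)))) := by
    rw [htel (2*(m+1)), htel (3*(m+1)), show 2*(m+1)+(m+1) = 3*(m+1) from by ring,
      show 3*(m+1)+(m+1) = 4*(m+1) from by ring, hp2, hp3, hp4]
    ring
  have hbsub : ∀ (c : ℝ) (g v : ℕ → ℝ),
      ∑ i ∈ Finset.range (m+1), (g i - c) * v i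
        = (∑ i ∈ Finset.range (m+1), g i * v i) - c * ∑ i ∈ Finset.range (m+1), v i := by
    intro c g v
    rw [Finset.mul_sum, ← Finset.sum_sub_distrib]
    exact Finset.sum_congr rfl fun i _ => by ring
  -- main identity
  have hkey : RSsum f u P - ((u x - u a) * f t0 + (u b - u x) * f t1) = S0 + S1 + S2 + S3 := by
    have hA : RSsum f u P
        = (∑ i ∈ Finset.range (m+1), f (pts i) * (u (pts (i+1)) - u (pts i)))
        + (∑ i ∈ Finset.range (m+1), f (pts ((m+1)+i)) * (u (pts ((m+1)+i+1)) - u (pts ((m+1)+i))))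
        + (∑ i ∈ Finset.range (m+1), f (pts (2*(m+1)+i)) * (u (pts (2*(m+1)+i+1)) - u (pts (2*(m+1)+i))))
        + (∑ i ∈ Finset.range (m+1), f (pts (3*(m+1)+i)) * (u (pts (3*(m+1)+i+1)) - u (pts (3*(m+1)+i)))) :=
      hsplit (fun i => f (pts i) * (u (pts (i+1)) - u (pts i)))
    rw [hA, hT01, hT23, hS0def, hS1def, hS2def, hS3def,
      hbsub (f t0) (fun i => f (pts i)) (fun i => u (pts (i+1)) - u (pts i)),
      hbsub (f t0) (fun i => f (pts ((m+1)+i))) (fun i => u (pts ((m+1)+i+1)) - u (pts ((m+1)+i))),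
      hbsub (f t1) (fun i => f (pts (2*(m+1)+i))) (fun i => u (pts (2*(m+1)+i+1)) - u (pts (2*(m+1)+i))),
      hbsub (f t1) (fun i => f (pts (3*(m+1)+i))) (fun i => u (pts (3*(m+1)+i+1)) - u (pts (3*(m+1)+i)))]
    ring
  -- middle variations add up
  have hmid : (eVariationOn f (Set.Icc t0 x)).toReal + (eVariationOn f (Set.Icc x t1)).toReal
      = (eVariationOn f (Set.Icc t0 t1)).toReal := by
    have h := eVariationOn.Icc_add_Icc f (s := Set.univ) ht0x hxt1 (Set.mem_univ x)
    simp only [Set.univ_inter] at h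
    rw [← h, ENNReal.toReal_add (hfin t0 x (by linarith) (by linarith))
      (hfin x t1 (by linarith) (by linarith))]
  -- conclusion
  have htri : |I - ((u x - u a) * f t0 + (u b - u x) * f t1)|
      ≤ |I - RSsum f u P| + |RSsum f u P - ((u x - u a) * f t0 + (u b - u x) * f t1)| :=
    abs_sub_le I (RSsum f u P) _
  have hIR : |I - RSsum f u P| = |RSsum f u P - I| := abs_sub_comm _ _
  have habs : |RSsum f u P - ((u x - u a) * f t0 + (u b - u x) * f t1)|
      ≤ (H*(t0-a)^r) * (eVariationOn f (Set.Icc a t0)).toReal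
        + ((H*M^r) * (eVariationOn f (Set.Icc t0 x)).toReal
          + (H*M^r) * (eVariationOn f (Set.Icc x t1)).toReal)
        + (H*(b-t1)^r) * (eVariationOn f (Set.Icc t1 b)).toReal := by
    rw [hkey]
    have t1' : |S0 + S1 + S2 + S3| ≤ |S0| + |S1| + |S2| + |S3| := by
      calc |S0 + S1 + S2 + S3| ≤ |S0 + S1 + S2| + |S3| := abs_add_le _ _
        _ ≤ |S0 + S1| + |S2| + |S3| := by linarith [abs_add_le (S0 + S1) S2]
        _ ≤ |S0| + |S1| + |S2| + |S3| := by linarith [abs_add_le S0 S1]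
    linarith [hS0b, hS1b, hS2b, hS3b]
  unfold totalVar
  rw [sub_sub]
  have hfold : H * M^r * ((eVariationOn f (Set.Icc t0 x)).toReal
      + (eVariationOn f (Set.Icc x t1)).toReal)
      = H * M^r * (eVariationOn f (Set.Icc t0 t1)).toReal := by rw [hmid]
  nlinarith [htri, hIR, habs, hRS, hfold]
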